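/- Let N ≥ 2 be an integer. For each k > 0 let (c(k), φ(·;k)) be the unique pair with c(k) > 0 and φ(·;k) : [0,1] → ℝ continuous on [0,1], twice continuously differentiable on (0,1], φ(0;k) = 0, φ'(r;k) → 0 as r → 0+, φ''(r;k)/(1+φ'(r;k)^2) + ((N-1)/r)φ'(r;k) = c(k) on (0,1], and φ'(1;k) = k. Then for every fixed r ∈ (0,1], both φ(r;k) → ∞ and φ'(r;k) → ∞ as k → ∞. -/

import Mathlib

open Set Filter Topology Real

/-- A translating profile for the radially symmetric mean curvature flow with speed `c` and
contact slope `k`: `φ` is continuous on `[0,1]`, twice continuously differentiable on `(0,1]`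
(with derivatives `φ'`, `φ''`), `φ(0) = 0`, `φ'(r) → 0` as `r → 0+`,
`φ''/(1+φ'^2) + ((N-1)/r) φ' = c` on `(0,1]`, and `φ'(1) = k`. -/
def IsTranslatingProfile (N : ℕ) (k c : ℝ) (phi phi' phi'' : ℝ → ℝ) : Prop :=
  ContinuousOn phi (Icc 0 1) ∧
  (∀ r ∈ Ioc (0:ℝ) 1, HasDerivWithinAt phi (phi' r) (Ioc 0 1) r) ∧
  (∀ r ∈ Ioc (0:ℝ) 1, HasDerivWithinAt phi' (phi'' r) (Ioc 0 1) r) ∧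
  ContinuousOn phi' (Ioc 0 1) ∧
  ContinuousOn phi'' (Ioc 0 1) ∧
  phi 0 = 0 ∧
  Tendsto phi' (nhdsWithin 0 (Ioi 0)) (nhds 0) ∧
  (∀ r ∈ Ioc (0:ℝ) 1, phi'' r / (1 + (phi' r) ^ 2) + (((N : ℝ) - 1) / r) * phi' r = c) ∧
  phi' 1 = k

private lemma mono_le {f f' : ℝ → ℝ} {a b : ℝ} (hab : a ≤ b)
    (hc : ContinuousOn f (Icc a b))
    (hd : ∀ x ∈ Ioo a b, HasDerivAt f (f' x) x)
    (h0 : ∀ x ∈ Ioo a b, 0 ≤ f' x) :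
    f a ≤ f b := by
  have hmono : MonotoneOn f (Icc a b) := by
    apply monotoneOn_of_deriv_nonneg (convex_Icc a b) hc
    · intro x hx
      rw [interior_Icc] at hx
      exact (hd x hx).differentiableAt.differentiableWithinAt
    · intro x hx
      rw [interior_Icc] at hx
      rw [(hd x hx).deriv]
      exact h0 x hx
  exact hmono (left_mem_Icc.2 hab) (right_mem_Icc.2 hab) hab

private lemma sup_helper {F : ℝ → ℝ} {t : ℝ} (ht0 : 0 < t) (ht1 : t ≤ 1)
    (hF : ContinuousOn F (Ioc 0 1))
    (hne : {s | s ∈ Ioc (0:ℝ) t ∧ 0 ≤ F s}.Nonempty) :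
    ∃ a, a ∈ Ioc (0:ℝ) t ∧ 0 ≤ F a ∧ ∀ s, a < s → s ≤ t → F s < 0 := by
  set S := {s | s ∈ Ioc (0:ℝ) t ∧ 0 ≤ F s} with hSdef
  have hbd : BddAbove S := ⟨t, fun s hs => hs.1.2⟩
  set a := sSup S with ha
  obtain ⟨s0, hs0⟩ := hne
  have ha_le : a ≤ t := csSup_le ⟨s0, hs0⟩ (fun s hs => hs.1.2)
  have ha_pos : 0 < a := lt_of_lt_of_le hs0.1.1 (le_csSup hbd hs0)
  have haI : a ∈ Ioc (0:ℝ) t := ⟨ha_pos, ha_le⟩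
  have hFa : 0 ≤ F a := by
    have hacl : a ∈ closure S := csSup_mem_closure ⟨s0, hs0⟩ hbd
    have hsub : S ⊆ Ioc (0:ℝ) 1 := fun s hs => ⟨hs.1.1, hs.1.2.trans ht1⟩
    have hcw : ContinuousWithinAt F S a := (hF a ⟨ha_pos, ha_le.trans ht1⟩).mono hsub
    have h1 : F a ∈ closure (F '' S) := hcw.mem_closure_image hacl
    have h2 : F '' S ⊆ Ici (0:ℝ) := by
      rintro y ⟨s, hs, rfl⟩; exact hs.2
    have := closure_mono h2 h1
    rwa [isClosed_Ici.closure_eq] at this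
  refine ⟨a, haI, hFa, fun s hs hst => ?_⟩
  by_contra hcon
  push_neg at hcon
  have : s ∈ S := ⟨⟨ha_pos.trans hs, hst⟩, hcon⟩
  exact absurd (le_csSup hbd this) (not_le.2 hs)

set_option maxHeartbeats 1000000 in
private lemma key_bound (N : ℕ) (hN : 2 ≤ N) (k c : ℝ) (hk : 0 < k) (hc : 0 < c)
    (phi phi' phi'' : ℝ → ℝ) (H : IsTranslatingProfile N k c phi phi' phi'')
    (r : ℝ) (hr0 : 0 < r) (hr1 : r ≤ 1) :
    k * (r / 2) - π ≤ phi' r ∧ k * (r / 2 * (r / 4)) - r / 2 * π ≤ phi r := by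
  obtain ⟨hphic, hder, hder2, hphi'c, hphi''c, hphi0, hlim, hode, hk1⟩ := H
  have hN1 : (1:ℝ) ≤ (N:ℝ) - 1 := by
    have : (2:ℝ) ≤ (N:ℝ) := by exact_mod_cast hN
    linarith
  have hN0 : (0:ℝ) < (N:ℝ) - 1 := lt_of_lt_of_le one_pos hN1
  set A := c / ((N:ℝ) - 1) with hA
  have hApos : 0 < A := div_pos hc hN0
  have hNA : ((N:ℝ) - 1) * A = c := by
    rw [hA]; field_simp
  have hDphi : ∀ x ∈ Ioo (0:ℝ) 1, HasDerivAt phi (phi' x) x := fun x hx =>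
    (hder x ⟨hx.1, hx.2.le⟩).hasDerivAt (Ioc_mem_nhds hx.1 hx.2)
  have hDphi' : ∀ x ∈ Ioo (0:ℝ) 1, HasDerivAt phi' (phi'' x) x := fun x hx =>
    (hder2 x ⟨hx.1, hx.2.le⟩).hasDerivAt (Ioc_mem_nhds hx.1 hx.2)
  have hsq : ∀ x : ℝ, (0:ℝ) < 1 + (phi' x) ^ 2 := fun x => by positivity
  have hodeD : ∀ x ∈ Ioc (0:ℝ) 1,
      phi'' x = (1 + (phi' x) ^ 2) * (c - ((N:ℝ) - 1) / x * phi' x) := by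
    intro x hx
    have h := hode x hx
    have h2 : phi'' x / (1 + (phi' x) ^ 2) = c - ((N:ℝ) - 1) / x * phi' x := by linarith
    have h3 := (hsq x).ne'
    field_simp at h2
    rw [h2]; ring
  have hDg : ∀ x ∈ Ioo (0:ℝ) 1,
      HasDerivAt (fun s => arctan (phi' s)) (c - ((N:ℝ) - 1) / x * phi' x) x := by
    intro x hx
    have h := (hDphi' x hx).arctan
    have h2 := (hsq x).ne'
    convert h using 1
    rw [hodeD x ⟨hx.1, hx.2.le⟩]
    field_simp
  have hgc : ContinuousOn (fun s => arctan (phi' s)) (Ioc 0 1) :=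
    Real.continuous_arctan.comp_continuousOn hphi'c
  have hglim : Tendsto (fun s => arctan (phi' s)) (𝓝[>] (0:ℝ)) (𝓝 0) := by
    have := (Real.continuous_arctan.tendsto 0).comp hlim
    simpa [Function.comp_def, Real.arctan_zero] using this
  -- Step 1 : phi' ≥ 0
  have step1 : ∀ t, 0 < t → t ≤ 1 → 0 ≤ phi' t := by
    intro t ht0 ht1
    by_contra hneg
    push_neg at hneg
    by_cases hSne : {s | s ∈ Ioc (0:ℝ) t ∧ 0 ≤ phi' s}.Nonempty
    · obtain ⟨a, haI, haF, hlt⟩ := sup_helper ht0 ht1 hphi'c hSne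
      have hat : a < t := by
        rcases lt_or_eq_of_le haI.2 with h | h
        · exact h
        · exfalso; rw [h] at haF; linarith
      have hg : arctan (phi' a) ≤ arctan (phi' t) := by
        apply mono_le hat.le
        · exact hgc.mono (fun s hs => ⟨lt_of_lt_of_le haI.1 hs.1, hs.2.trans ht1⟩)
        · exact fun x hx => hDg x ⟨haI.1.trans hx.1, lt_of_lt_of_le hx.2 ht1⟩
        · intro x hx
          have hx0 : 0 < x := haI.1.trans hx.1
          have hx' : phi' x < 0 := hlt x hx.1 hx.2.le
          nlinarith [mul_neg_of_pos_of_neg (div_pos hN0 hx0) hx']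
      have h1 : 0 ≤ arctan (phi' a) := by
        rw [← Real.arctan_zero]; exact Real.arctan_strictMono.monotone haF
      have h2 : arctan (phi' t) < 0 := by
        rw [← Real.arctan_zero]; exact Real.arctan_strictMono hneg
      linarith
    · have hallneg : ∀ s, 0 < s → s ≤ t → phi' s < 0 := by
        intro s h1 h2
        by_contra h
        push_neg at h
        exact hSne ⟨s, ⟨h1, h2⟩, h⟩
      have hev : ∀ᶠ s in 𝓝[>] (0:ℝ), arctan (phi' s) ≤ arctan (phi' t) := by
        filter_upwards [Ioo_mem_nhdsGT ht0] with s hs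
        apply mono_le hs.2.le
        · exact hgc.mono (fun u hu => ⟨lt_of_lt_of_le hs.1 hu.1, hu.2.trans ht1⟩)
        · exact fun x hx => hDg x ⟨hs.1.trans hx.1, lt_of_lt_of_le hx.2 ht1⟩
        · intro x hx
          have hx0 : 0 < x := hs.1.trans hx.1
          have hx' : phi' x < 0 := hallneg x hx0 hx.2.le
          nlinarith [mul_neg_of_pos_of_neg (div_pos hN0 hx0) hx']
      have h0 : (0:ℝ) ≤ arctan (phi' t) := le_of_tendsto hglim hev
      have h2 : arctan (phi' t) < 0 := by
        rw [← Real.arctan_zero]; exact Real.arctan_strictMono hneg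
      linarith
  -- Step 2 : phi' t ≤ A t
  have hble : ∀ x, 0 < x → A * x ≤ phi' x → c ≤ ((N:ℝ) - 1) / x * phi' x := by
    intro x hx0 hge
    have h1 : ((N:ℝ) - 1) / x * (A * x) ≤ ((N:ℝ) - 1) / x * phi' x :=
      mul_le_mul_of_nonneg_left hge (div_nonneg hN0.le hx0.le)
    have h2 : ((N:ℝ) - 1) / x * (A * x) = c := by
      rw [← hNA]; field_simp
    linarith
  have step2 : ∀ t, 0 < t → t ≤ 1 → phi' t ≤ A * t := by
    intro t ht0 ht1
    by_contra hgt
    push_neg at hgt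
    have hFc : ContinuousOn (fun s => A * s - phi' s) (Ioc 0 1) :=
      (continuous_const.mul continuous_id).continuousOn.sub hphi'c
    by_cases hSne : {s | s ∈ Ioc (0:ℝ) t ∧ 0 ≤ A * s - phi' s}.Nonempty
    · obtain ⟨a, haI, haF, hlt⟩ := sup_helper ht0 ht1 hFc hSne
      have hat : a < t := by
        rcases lt_or_eq_of_le haI.2 with h | h
        · exact h
        · exfalso; rw [h] at haF; linarith
      have hg : arctan (A * a) - arctan (phi' a) ≤ arctan (A * t) - arctan (phi' t) := by
        apply mono_le (f := fun s => arctan (A * s) - arctan (phi' s))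
          (f' := fun x => 1 / (1 + (A * x) ^ 2) * A - (c - ((N:ℝ) - 1) / x * phi' x)) hat.le
        · apply ContinuousOn.sub
          · exact (Real.continuous_arctan.comp (continuous_const.mul continuous_id)).continuousOn
          · exact hgc.mono (fun s hs => ⟨lt_of_lt_of_le haI.1 hs.1, hs.2.trans ht1⟩)
        · intro x hx
          have hxI : x ∈ Ioo (0:ℝ) 1 := ⟨haI.1.trans hx.1, lt_of_lt_of_le hx.2 ht1⟩
          have hd1 : HasDerivAt (fun s => arctan (A * s)) (1 / (1 + (A * x) ^ 2) * A) x := by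
            have := (Real.hasDerivAt_arctan (A * x)).comp x ((hasDerivAt_id x).const_mul A)
            simpa [Function.comp_def] using this
          exact hd1.sub (hDg x hxI)
        · intro x hx
          have hx0 : 0 < x := haI.1.trans hx.1
          have hx' : A * x - phi' x < 0 := hlt x hx.1 hx.2.le
          have h3 : c ≤ ((N:ℝ) - 1) / x * phi' x := hble x hx0 (by linarith)
          have hpos : 0 < 1 / (1 + (A * x) ^ 2) * A := by positivity
          linarith
      have h1 : arctan (phi' a) ≤ arctan (A * a) :=
        Real.arctan_strictMono.monotone (by linarith)
      have h2 : arctan (A * t) < arctan (phi' t) := Real.arctan_strictMono hgt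
      linarith
    · have hallgt : ∀ s, 0 < s → s ≤ t → A * s < phi' s := by
        intro s h1 h2
        by_contra h
        push_neg at h
        exact hSne ⟨s, ⟨h1, h2⟩, by linarith⟩
      have hev : ∀ᶠ s in 𝓝[>] (0:ℝ), arctan (phi' t) ≤ arctan (phi' s) := by
        filter_upwards [Ioo_mem_nhdsGT ht0] with s hs
        have hba : -arctan (phi' s) ≤ -arctan (phi' t) := by
          apply mono_le (f := fun u => -arctan (phi' u))
            (f' := fun x => -(c - ((N:ℝ) - 1) / x * phi' x)) hs.2.le
          · exact (hgc.mono (fun u hu => ⟨lt_of_lt_of_le hs.1 hu.1, hu.2.trans ht1⟩)).neg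
          · exact fun x hx => (hDg x ⟨hs.1.trans hx.1, lt_of_lt_of_le hx.2 ht1⟩).neg
          · intro x hx
            have hx0 : 0 < x := hs.1.trans hx.1
            have h3 : c ≤ ((N:ℝ) - 1) / x * phi' x :=
              hble x hx0 (hallgt x hx0 hx.2.le).le
            linarith
        linarith
      have h0 : arctan (phi' t) ≤ 0 := ge_of_tendsto hglim hev
      have h2 : phi' t ≤ 0 := by
        by_contra h
        push_neg at h
        have := Real.arctan_strictMono h
        rw [Real.arctan_zero] at this
        linarith
      nlinarith
  -- Step 3 : phi' monotone
  have step3 : ∀ a b, 0 < a → a ≤ b → b ≤ 1 → phi' a ≤ phi' b := by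
    intro a b ha hab hb1
    apply mono_le (f' := phi'') hab
    · exact hphi'c.mono (fun s hs => ⟨ha.trans_le hs.1, hs.2.trans hb1⟩)
    · exact fun x hx => hDphi' x ⟨ha.trans hx.1, lt_of_lt_of_le hx.2 hb1⟩
    · intro x hx
      have hx0 : 0 < x := ha.trans hx.1
      have hx1 : x ≤ 1 := hx.2.le.trans hb1
      rw [hodeD x ⟨hx0, hx1⟩]
      apply mul_nonneg (hsq x).le
      have h1 : phi' x ≤ A * x := step2 x hx0 hx1
      have h2 : ((N:ℝ) - 1) / x * phi' x ≤ ((N:ℝ) - 1) / x * (A * x) :=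
        mul_le_mul_of_nonneg_left h1 (div_nonneg hN0.le hx0.le)
      have h3 : ((N:ℝ) - 1) / x * (A * x) = c := by
        rw [← hNA]; field_simp
      linarith
  -- Step 4+5 : lower bound for phi'
  have step45 : ∀ t, 0 < t → t ≤ 1 → k * (t / 2) - π ≤ phi' t := by
    intro t ht0 ht1
    have ht2 : 0 < t / 2 := half_pos ht0
    have hpt : 0 ≤ phi' t := step1 t ht0 ht1
    set m := c - 2 * ((N:ℝ) - 1) * phi' t / t with hm
    have hkey : arctan (phi' (t / 2)) - m * (t / 2) ≤ arctan (phi' t) - m * t := by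
      apply mono_le (f := fun s => arctan (phi' s) - m * s)
        (f' := fun x => (c - ((N:ℝ) - 1) / x * phi' x) - m) (by linarith)
      · exact (hgc.mono (fun s hs => ⟨ht2.trans_le hs.1, hs.2.trans ht1⟩)).sub
          (continuous_const.mul continuous_id).continuousOn
      · intro x hx
        have hxI : x ∈ Ioo (0:ℝ) 1 := ⟨ht2.trans hx.1, lt_of_lt_of_le hx.2 ht1⟩
        have hd1 : HasDerivAt (fun s : ℝ => m * s) m x := by
          simpa using (hasDerivAt_id x).const_mul m
        exact (hDg x hxI).sub hd1
      · intro x hx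
        have hx0 : 0 < x := ht2.trans hx.1
        have hx1 : x ≤ 1 := hx.2.le.trans ht1
        have hmon : phi' x ≤ phi' t := step3 x t hx0 hx.2.le ht1
        have hxp : 0 ≤ phi' x := step1 x hx0 hx1
        -- (N-1)/x * phi' x ≤ (N-1)/x * phi' t ≤ (N-1)/(t/2) * phi' t = 2(N-1) phi' t / t
        have h1 : ((N:ℝ) - 1) / x * phi' x ≤ ((N:ℝ) - 1) / x * phi' t :=
          mul_le_mul_of_nonneg_left hmon (div_nonneg hN0.le hx0.le)
        have h2 : ((N:ℝ) - 1) / x ≤ ((N:ℝ) - 1) / (t / 2) :=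
          div_le_div_of_nonneg_left hN0.le ht2 hx.1.le
        have h3 : ((N:ℝ) - 1) / x * phi' t ≤ ((N:ℝ) - 1) / (t / 2) * phi' t :=
          mul_le_mul_of_nonneg_right h2 hpt
        have h4 : ((N:ℝ) - 1) / (t / 2) * phi' t = 2 * ((N:ℝ) - 1) * phi' t / t := by
          rw [div_div_eq_mul_div]; ring
        simp only [hm]
        linarith
    have hb1 : arctan (phi' t) < π / 2 := Real.arctan_lt_pi_div_two _
    have hb2 : -(π / 2) < arctan (phi' (t / 2)) := Real.neg_pi_div_two_lt_arctan _
    -- m * (t/2) ≤ π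
    have hmt : m * (t / 2) ≤ π := by
      have he : m * t - m * (t / 2) = m * (t / 2) := by ring
      linarith
    -- expand : c*t/2 - (N-1)*phi' t ≤ π
    have hexp : c * t / 2 - ((N:ℝ) - 1) * phi' t ≤ π := by
      have : m * (t / 2) = c * t / 2 - ((N:ℝ) - 1) * phi' t := by
        rw [hm]; field_simp
      linarith
    -- c ≥ (N-1) k
    have hck : ((N:ℝ) - 1) * k ≤ c := by
      have := step2 1 one_pos le_rfl
      rw [hk1, mul_one] at this
      nlinarith
    have hpi := Real.pi_pos
    have e1 : ((N:ℝ) - 1) * k * t ≤ c * t := by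
      calc ((N:ℝ) - 1) * k * t = (((N:ℝ) - 1) * k) * t := by ring
        _ ≤ c * t := mul_le_mul_of_nonneg_right hck ht0.le
    have epi : π ≤ ((N:ℝ) - 1) * π := by nlinarith
    have e2 : ((N:ℝ) - 1) * (k * (t / 2) - phi' t - π) ≤ 0 := by nlinarith
    have e3 : k * (t / 2) - phi' t - π ≤ 0 := by
      by_contra hcon
      push_neg at hcon
      nlinarith [mul_pos hN0 hcon]
    linarith
  constructor
  · exact step45 r hr0 hr1
  · -- phi bound
    have hr2 : 0 < r / 2 := half_pos hr0
    have h0 : phi 0 ≤ phi (r / 2) := by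
      apply mono_le (f' := phi') (by linarith)
      · exact hphic.mono (fun s hs => ⟨hs.1, hs.2.trans (by linarith)⟩)
      · exact fun x hx => hDphi x ⟨hx.1, lt_of_lt_of_le hx.2 (by linarith)⟩
      · exact fun x hx => step1 x hx.1 (hx.2.le.trans (by linarith))
    have h1 : phi (r / 2) - phi' (r / 2) * (r / 2) ≤ phi r - phi' (r / 2) * r := by
      apply mono_le (f := fun s => phi s - phi' (r / 2) * s)
        (f' := fun x => phi' x - phi' (r / 2)) (by linarith)
      · exact (hphic.mono (fun s hs => ⟨(hr2.trans_le hs.1).le, hs.2.trans hr1⟩)).sub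
          (continuous_const.mul continuous_id).continuousOn
      · intro x hx
        have hxI : x ∈ Ioo (0:ℝ) 1 := ⟨hr2.trans hx.1, lt_of_lt_of_le hx.2 hr1⟩
        have hd1 : HasDerivAt (fun s : ℝ => phi' (r / 2) * s) (phi' (r / 2)) x := by
          simpa using (hasDerivAt_id x).const_mul (phi' (r / 2))
        exact (hDphi x hxI).sub hd1
      · intro x hx
        exact sub_nonneg.2 (step3 (r / 2) x hr2 hx.1.le (hx.2.le.trans hr1))
    have h2 : k * (r / 2 / 2) - π ≤ phi' (r / 2) := step45 (r / 2) hr2 (by linarith)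
    rw [hphi0] at h0
    have h3 : phi' (r / 2) * (r / 2) ≤ phi r := by
      have hre : phi' (r / 2) * r - phi' (r / 2) * (r / 2) = phi' (r / 2) * (r / 2) := by ring
      linarith
    have h4 : (k * (r / 2 / 2) - π) * (r / 2) ≤ phi' (r / 2) * (r / 2) :=
      mul_le_mul_of_nonneg_right h2 hr2.le
    have h5 : (k * (r / 2 / 2) - π) * (r / 2) = k * (r / 2 * (r / 4)) - r / 2 * π := by ring
    linarith

/-- for the (unique) translating profiles `φ(·;k)` with speed `c(k)`,
both `φ(r;k) → ∞` and `φ'(r;k) → ∞` as `k → ∞`, for every fixed `r ∈ (0,1]`. -/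
theorem profile_tendsto_atTop (N : ℕ) (hN : 2 ≤ N)
    (c : ℝ → ℝ) (phi phi' phi'' : ℝ → ℝ → ℝ)
    (hc : ∀ k > (0:ℝ), 0 < c k)
    (hprof : ∀ k > (0:ℝ), IsTranslatingProfile N k (c k) (phi k) (phi' k) (phi'' k))
    (huniq : ∀ k > (0:ℝ), ∀ c₂ : ℝ, ∀ psi psi' psi'' : ℝ → ℝ, 0 < c₂ →
      IsTranslatingProfile N k c₂ psi psi' psi'' →
      c₂ = c k ∧ EqOn psi (phi k) (Icc 0 1)) :
    ∀ r ∈ Ioc (0:ℝ) 1,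
      Tendsto (fun k => phi k r) atTop atTop ∧ Tendsto (fun k => phi' k r) atTop atTop := by
  intro r hr
  obtain ⟨hr0, hr1⟩ := hr
  have hbounds : ∀ k, 0 < k →
      k * (r / 2) - π ≤ phi' k r ∧ k * (r / 2 * (r / 4)) - r / 2 * π ≤ phi k r :=
    fun k hk => key_bound N hN k (c k) hk (hc k hk) (phi k) (phi' k) (phi'' k)
      (hprof k hk) r hr0 hr1
  constructor
  · have hf1 : Tendsto (fun k : ℝ => k * (r / 2 * (r / 4)) + -(r / 2 * π)) atTop atTop :=
      tendsto_atTop_add_const_right _ _ (Tendsto.atTop_mul_const (by positivity) tendsto_id)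
    refine tendsto_atTop_mono' atTop ?_ hf1
    filter_upwards [eventually_gt_atTop 0] with k hk
    have := (hbounds k hk).2
    linarith
  · have hf1 : Tendsto (fun k : ℝ => k * (r / 2) + -π) atTop atTop :=
      tendsto_atTop_add_const_right _ _ (Tendsto.atTop_mul_const (by positivity) tendsto_id)
    refine tendsto_atTop_mono' atTop ?_ hf1
    filter_upwards [eventually_gt_atTop 0] with k hk
    have := (hbounds k hk).1
    linarith
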